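/- Let H be a symmetric positive definite matrix with eigenvalues ≥ M, and for thresholds s ≥ M let H_s denote the matrix with same eigenvectors and each eigenvalue λ replaced by max{λ, s}. If m*, m'* ≥ M with m* ≥ m'*, b = (H'_{m*})^{−1} m' and c = (H'_{m'*})^{−1} m' for a symmetric positive definite H' and vector m', then (c − b)·b ≥ 0 and hence ‖b − c‖₂² + ‖b‖₂² ≤ ‖c‖₂². -/

import Mathlib

open Matrix

/-- Euclidean norm of a vector in `ℝ^d`. -/
noncomputable def vnorm {d : ℕ} (v : Fin d → ℝ) : ℝ :=
  Real.sqrt (∑ i, v i ^ 2)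

/-- The matrix with the same eigenvectors as `A` but each eigenvalue `λ` replaced by
`max λ s`. -/
noncomputable def clip {d : ℕ} {A : Matrix (Fin d) (Fin d) ℝ} (hA : A.IsHermitian)
    (s : ℝ) : Matrix (Fin d) (Fin d) ℝ :=
  (hA.eigenvectorUnitary : Matrix (Fin d) (Fin d) ℝ) *
    Matrix.diagonal (fun i => max (hA.eigenvalues i) s) *
    star (hA.eigenvectorUnitary : Matrix (Fin d) (Fin d) ℝ)

lemma clip_inv {d : ℕ} {A : Matrix (Fin d) (Fin d) ℝ} (hA : A.IsHermitian)
    {s : ℝ} (hs : 0 < s) :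
    (clip hA s)⁻¹ = (hA.eigenvectorUnitary : Matrix (Fin d) (Fin d) ℝ) *
      Matrix.diagonal (fun i => (max (hA.eigenvalues i) s)⁻¹) *
      star (hA.eigenvectorUnitary : Matrix (Fin d) (Fin d) ℝ) := by
  set U : Matrix (Fin d) (Fin d) ℝ := (hA.eigenvectorUnitary : Matrix (Fin d) (Fin d) ℝ) with hU
  have hUs : star U * U = 1 := Matrix.UnitaryGroup.star_mul_self _
  have hsU : U * star U = 1 := mul_eq_one_comm.mp hUs
  apply Matrix.inv_eq_right_inv
  have hne : ∀ i, max (hA.eigenvalues i) s ≠ 0 := fun i =>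
    ne_of_gt (lt_max_of_lt_right hs)
  calc clip hA s * (U * Matrix.diagonal (fun i => (max (hA.eigenvalues i) s)⁻¹) * star U)
      = U * (Matrix.diagonal (fun i => max (hA.eigenvalues i) s) * ((star U * U) *
          Matrix.diagonal (fun i => (max (hA.eigenvalues i) s)⁻¹))) * star U := by
        simp only [clip, hU]; ring_nf; noncomm_ring
    _ = 1 := by
        rw [hUs, one_mul, Matrix.diagonal_mul_diagonal]
        have : (fun i => max (hA.eigenvalues i) s * (max (hA.eigenvalues i) s)⁻¹) =
            fun _ => (1:ℝ) := funext fun i => mul_inv_cancel₀ (hne i)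
        rw [this, Matrix.diagonal_one, Matrix.mul_one, hsU]

lemma vnorm_sq {d : ℕ} (v : Fin d → ℝ) : vnorm v ^ 2 = v ⬝ᵥ v := by
  rw [vnorm, Real.sq_sqrt (Finset.sum_nonneg fun i _ => sq_nonneg _)]
  simp [dotProduct, sq]
lemma unitary_dot {d : ℕ} (U : Matrix.unitaryGroup (Fin d) ℝ) (v w : Fin d → ℝ) :
    ((U : Matrix (Fin d) (Fin d) ℝ) *ᵥ v) ⬝ᵥ ((U : Matrix (Fin d) (Fin d) ℝ) *ᵥ w) = v ⬝ᵥ w := by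
  set V : Matrix (Fin d) (Fin d) ℝ := (U : Matrix (Fin d) (Fin d) ℝ) with hV
  have hUs : star V * V = 1 := Matrix.UnitaryGroup.star_mul_self _
  have hT : Vᵀ * V = 1 := by
    simpa [Matrix.star_eq_conjTranspose, Matrix.conjTranspose_eq_transpose_of_trivial] using hUs
  calc (V *ᵥ v) ⬝ᵥ (V *ᵥ w)
      = ((V *ᵥ v) ᵥ* V) ⬝ᵥ w := Matrix.dotProduct_mulVec _ _ _
    _ = ((Vᵀ * V) *ᵥ v) ⬝ᵥ w := by
        rw [← Matrix.mulVec_transpose, Matrix.mulVec_mulVec]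
    _ = v ⬝ᵥ w := by rw [hT, Matrix.one_mulVec]

/-- For a symmetric positive definite `H'`, a vector `m'`, and thresholds
`m* ≥ m'* ≥ M`, the clipped Newton directions `b = (H'_{m*})⁻¹ m'` and
`c = (H'_{m'*})⁻¹ m'` satisfy `(c − b)⬝b ≥ 0`, hence
`‖b − c‖₂² + ‖b‖₂² ≤ ‖c‖₂²`. -/
theorem stmt_14 {d : ℕ} (M mA mB : ℝ) (hM : 0 < M)
    (hmB : M ≤ mB) (hmAB : mB ≤ mA)
    (m' : Fin d → ℝ) (H' : Matrix (Fin d) (Fin d) ℝ) (hH' : H'.PosDef)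
    (b c : Fin d → ℝ)
    (hb : b = (clip hH'.1 mA)⁻¹.mulVec m')
    (hc : c = (clip hH'.1 mB)⁻¹.mulVec m') :
    0 ≤ (c - b) ⬝ᵥ b ∧ vnorm (b - c) ^ 2 + vnorm b ^ 2 ≤ vnorm c ^ 2 := by
  have hmA0 : 0 < mA := hM.trans_le (hmB.trans hmAB)
  have hmB0 : 0 < mB := hM.trans_le hmB
  set U : Matrix (Fin d) (Fin d) ℝ := (hH'.1.eigenvectorUnitary : Matrix (Fin d) (Fin d) ℝ) with hU
  set ev := hH'.1.eigenvalues with hev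
  set w : Fin d → ℝ := (star U) *ᵥ m' with hw
  set x : Fin d → ℝ := fun i => (max (ev i) mA)⁻¹ * w i with hx
  set y : Fin d → ℝ := fun i => (max (ev i) mB)⁻¹ * w i with hy
  have key : ∀ s : ℝ, 0 < s →
      (clip hH'.1 s)⁻¹ *ᵥ m' = U *ᵥ (fun i => (max (ev i) s)⁻¹ * w i) := by
    intro s hs
    have hD : (Matrix.diagonal fun i => (max (ev i) s)⁻¹) *ᵥ w
        = fun i => (max (ev i) s)⁻¹ * w i := funext fun i => Matrix.mulVec_diagonal _ _ _
    rw [clip_inv hH'.1 hs, ← Matrix.mulVec_mulVec, ← Matrix.mulVec_mulVec, ← hw, hD]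
  have hb' : b = U *ᵥ x := by rw [hb]; exact key mA hmA0
  have hc' : c = U *ᵥ y := by rw [hc]; exact key mB hmB0
  have hsub : c - b = U *ᵥ (y - x) := by
    rw [hb', hc', Matrix.mulVec_sub]
  have h1 : 0 ≤ (c - b) ⬝ᵥ b := by
    rw [hsub, hb', unitary_dot]
    apply Finset.sum_nonneg
    intro i _
    have hA0 : 0 < max (ev i) mA := lt_max_of_lt_right hmA0
    have hB0 : 0 < max (ev i) mB := lt_max_of_lt_right hmB0
    have hle : max (ev i) mB ≤ max (ev i) mA := max_le_max le_rfl hmAB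
    have hinv : (max (ev i) mA)⁻¹ ≤ (max (ev i) mB)⁻¹ := by
      exact inv_anti₀ hB0 hle
    show 0 ≤ (y - x) i * x i
    simp only [Pi.sub_apply, hx, hy]
    have h2 : 0 ≤ ((max (ev i) mB)⁻¹ - (max (ev i) mA)⁻¹) * (max (ev i) mA)⁻¹ * w i ^ 2 := by
      apply mul_nonneg (mul_nonneg (sub_nonneg.mpr hinv) (inv_nonneg.mpr hA0.le)) (sq_nonneg _)
    nlinarith [h2]
  refine ⟨h1, ?_⟩
  have hexp : c ⬝ᵥ c = b ⬝ᵥ b + 2 * ((c - b) ⬝ᵥ b) + (b - c) ⬝ᵥ (b - c) := by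
    simp only [dotProduct, Pi.sub_apply, Finset.mul_sum, ← Finset.sum_add_distrib]
    exact Finset.sum_congr rfl fun i _ => by ring
  rw [vnorm_sq, vnorm_sq, vnorm_sq]
  linarith
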